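/- arXiv:2103.01447 — 3 statements merged into one kernel-verified Lean document; each statement's English description precedes it below -/
import Mathlib

section
/- Fix x, x' ∈ ℝ^d, v' ∈ ℝ^d, y_1, …, y_n ∈ ℝ^d, λ ∈ ℝ and 1 ≤ b ≤ n. Then E_I[‖v(I) − ∇f(x)‖²] ≤ (1 − λ)² ‖v' − ∇f(x')‖² + (2L²/b) ‖x − x'‖² + (2λ²/b) · (1/n) ∑_{j=1}^n ‖∇f_j(x') − y_j‖², where v(I) is the ZeroSARAH gradient estimator and E_I is the expectation over a uniformly random size-b minibatch. -/
noncomputable section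

/-- The average function `f = (1/n) ∑ᵢ fᵢ`. -/
noncomputable def avgF {d n : ℕ} (f : Fin n → EuclideanSpace ℝ (Fin d) → ℝ) :
    EuclideanSpace ℝ (Fin d) → ℝ :=
  fun z => (n : ℝ)⁻¹ * ∑ i, f i z

/-- Expectation (average) of a real-valued function of a uniformly random
size-`b` subset of `{1,…,n}`. -/
noncomputable def expSub (n b : ℕ) (g : Finset (Fin n) → ℝ) : ℝ :=
  (∑ I ∈ Finset.powersetCard b (Finset.univ : Finset (Fin n)), g I) /
    ((Finset.powersetCard b (Finset.univ : Finset (Fin n))).card : ℝ)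

/-- The ZeroSARAH gradient estimator
`v(I) = (1/b)∑_{i∈I}(∇fᵢ(x) − ∇fᵢ(x')) + (1−λ)v' + λ[(1/b)∑_{i∈I}(∇fᵢ(x') − yᵢ) + (1/n)∑ⱼ yⱼ]`. -/
noncomputable def zsEst {d n : ℕ} (f : Fin n → EuclideanSpace ℝ (Fin d) → ℝ)
    (x x' v' : EuclideanSpace ℝ (Fin d)) (y : Fin n → EuclideanSpace ℝ (Fin d))
    (lam : ℝ) (b : ℕ) (I : Finset (Fin n)) : EuclideanSpace ℝ (Fin d) :=
  (b : ℝ)⁻¹ • ∑ i ∈ I, (gradient (f i) x - gradient (f i) x')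
    + (1 - lam) • v'
    + lam • ((b : ℝ)⁻¹ • ∑ i ∈ I, (gradient (f i) x' - y i)
        + (n : ℝ)⁻¹ • ∑ j, y j)

section Aux
open Finset


lemma count_one {α : Type*} [DecidableEq α] (s : Finset α) (b : ℕ) (hb : 1 ≤ b)
    (i : α) (hi : i ∈ s) :
    ((s.powersetCard b).filter (fun I => i ∈ I)).card
      = (s.card - 1).choose (b - 1) := by
  rw [← Finset.card_erase_of_mem hi, ← Finset.card_powersetCard]
  apply Finset.card_nbij' (fun I => I.erase i) (fun J => insert i J)
  · intro I hI
    simp only [Finset.mem_coe, Finset.mem_filter, Finset.mem_powersetCard] at hI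
    obtain ⟨⟨hIs, hIc⟩, hiI⟩ := hI
    exact Finset.mem_powersetCard.2
      ⟨Finset.erase_subset_erase i hIs, by rw [Finset.card_erase_of_mem hiI, hIc]⟩
  · intro J hJ
    obtain ⟨hJs, hJc⟩ := Finset.mem_powersetCard.1 hJ
    have hiJ : i ∉ J := fun h => (Finset.mem_erase.1 (hJs h)).1 rfl
    refine Finset.mem_filter.2 ⟨Finset.mem_powersetCard.2 ⟨?_, ?_⟩, Finset.mem_insert_self i J⟩
    · exact Finset.insert_subset hi (hJs.trans (Finset.erase_subset i s))
    · rw [Finset.card_insert_of_notMem hiJ, hJc, Nat.sub_add_cancel hb]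
  · intro I hI
    exact Finset.insert_erase (Finset.mem_filter.1 hI).2
  · intro J hJ
    obtain ⟨hJs, _⟩ := Finset.mem_powersetCard.1 hJ
    have hiJ : i ∉ J := fun h => (Finset.mem_erase.1 (hJs h)).1 rfl
    exact Finset.erase_insert hiJ

lemma count_two {α : Type*} [DecidableEq α] (s : Finset α) (b : ℕ) (hb : 2 ≤ b)
    (i j : α) (hi : i ∈ s) (hj : j ∈ s) (hij : i ≠ j) :
    ((s.powersetCard b).filter (fun I => i ∈ I ∧ j ∈ I)).card
      = (s.card - 2).choose (b - 2) := by
  have hjs : j ∈ s.erase i := Finset.mem_erase.2 ⟨hij.symm, hj⟩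
  have hcard : ((s.erase i).erase j).card = s.card - 2 := by
    rw [Finset.card_erase_of_mem hjs, Finset.card_erase_of_mem hi, Nat.sub_sub]
  rw [← hcard, ← Finset.card_powersetCard]
  apply Finset.card_nbij' (fun I => (I.erase i).erase j) (fun J => insert i (insert j J))
  · intro I hI
    simp only [Finset.mem_coe, Finset.mem_filter, Finset.mem_powersetCard] at hI
    obtain ⟨⟨hIs, hIc⟩, hiI, hjI⟩ := hI
    refine Finset.mem_powersetCard.2 ⟨Finset.erase_subset_erase j (Finset.erase_subset_erase i hIs), ?_⟩
    rw [Finset.card_erase_of_mem (Finset.mem_erase.2 ⟨hij.symm, hjI⟩),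
      Finset.card_erase_of_mem hiI, hIc, Nat.sub_sub]
  · intro J hJ
    obtain ⟨hJs, hJc⟩ := Finset.mem_powersetCard.1 hJ
    have hjJ : j ∉ J := fun h => (Finset.mem_erase.1 (hJs h)).1 rfl
    have hiJ : i ∉ J := fun h => (Finset.mem_erase.1 (Finset.mem_erase.1 (hJs h)).2).1 rfl
    have hiJ' : i ∉ insert j J := by simp [hij, hiJ]
    refine Finset.mem_filter.2 ⟨Finset.mem_powersetCard.2 ⟨?_, ?_⟩, Finset.mem_insert_self i _,
      Finset.mem_insert_of_mem (Finset.mem_insert_self j J)⟩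
    · refine Finset.insert_subset hi (Finset.insert_subset hj ?_)
      exact (hJs.trans ((Finset.erase_subset _ _).trans (Finset.erase_subset _ _)))
    · rw [Finset.card_insert_of_notMem hiJ', Finset.card_insert_of_notMem hjJ, hJc]
      omega
  · intro I hI
    obtain ⟨_, hiI, hjI⟩ := Finset.mem_filter.1 hI
    dsimp only
    rw [Finset.insert_erase (Finset.mem_erase.2 ⟨hij.symm, hjI⟩), Finset.insert_erase hiI]
  · intro J hJ
    obtain ⟨hJs, _⟩ := Finset.mem_powersetCard.1 hJ
    have hjJ : j ∉ J := fun h => (Finset.mem_erase.1 (hJs h)).1 rfl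
    have hiJ : i ∉ J := fun h => (Finset.mem_erase.1 (Finset.mem_erase.1 (hJs h)).2).1 rfl
    have hiJ' : i ∉ insert j J := by simp [hij, hiJ]
    dsimp only
    rw [Finset.erase_insert hiJ', Finset.erase_insert hjJ]

lemma swap_one {α M : Type*} [DecidableEq α] [AddCommMonoid M] (s : Finset α) (b : ℕ)
    (g : α → M) :
    ∑ I ∈ s.powersetCard b, ∑ i ∈ I, g i
      = ∑ i ∈ s, ((s.powersetCard b).filter (fun I => i ∈ I)).card • g i := by
  have h1 : ∀ I ∈ s.powersetCard b, ∑ i ∈ I, g i = ∑ i ∈ s, if i ∈ I then g i else 0 := by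
    intro I hI
    rw [Finset.sum_ite_mem, Finset.inter_eq_right.2 (Finset.mem_powersetCard.1 hI).1]
  rw [Finset.sum_congr rfl h1, Finset.sum_comm]
  refine Finset.sum_congr rfl fun i _ => ?_
  rw [← Finset.sum_filter, Finset.sum_const]

lemma swap_two {α : Type*} [DecidableEq α] (s : Finset α) (b : ℕ)
    (t : α → α → ℝ) :
    ∑ I ∈ s.powersetCard b, ∑ i ∈ I, ∑ j ∈ I.erase i, t i j
      = ∑ i ∈ s, ∑ j ∈ s.erase i,
          (((s.powersetCard b).filter (fun I => i ∈ I ∧ j ∈ I)).card : ℝ) * t i j := by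
  have h1 : ∀ I ∈ s.powersetCard b,
      ∑ i ∈ I, ∑ j ∈ I.erase i, t i j
        = ∑ i ∈ s, ∑ j ∈ s.erase i, if i ∈ I ∧ j ∈ I then t i j else 0 := by
    intro I hI
    have hIs := (Finset.mem_powersetCard.1 hI).1
    have h2 : ∀ i ∈ I, ∑ j ∈ I.erase i, t i j
        = ∑ j ∈ s.erase i, if i ∈ I ∧ j ∈ I then t i j else 0 := by
      intro i hiI
      rw [show (fun j => if i ∈ I ∧ j ∈ I then t i j else 0)
          = (fun j => if j ∈ I then t i j else 0) from by
        funext j; simp [hiI]]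
      rw [Finset.sum_ite_mem]
      congr 1
      ext j
      simp only [Finset.mem_inter, Finset.mem_erase]
      constructor
      · rintro ⟨hji, hjI⟩; exact ⟨⟨hji, hIs hjI⟩, hjI⟩
      · rintro ⟨⟨hji, _⟩, hjI⟩; exact ⟨hji, hjI⟩
    rw [Finset.sum_congr rfl h2]
    refine Finset.sum_subset hIs (fun x _ hxI => ?_)
    exact Finset.sum_eq_zero (fun j _ => by simp [hxI])
  rw [Finset.sum_congr rfl h1, Finset.sum_comm]
  refine Finset.sum_congr rfl fun i _ => ?_
  rw [Finset.sum_comm]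
  refine Finset.sum_congr rfl fun j _ => ?_
  rw [← Finset.sum_filter, Finset.sum_const, nsmul_eq_mul]

lemma key_ineq {n b : ℕ} {G : Type*} [NormedAddCommGroup G] [InnerProductSpace ℝ G]
    (hb1 : 1 ≤ b) (u : Fin n → G) (hu : ∑ i, u i = 0) :
    ∑ I ∈ Finset.powersetCard b (Finset.univ : Finset (Fin n)), ‖∑ i ∈ I, u i‖ ^ 2
      ≤ ((n - 1).choose (b - 1) : ℝ) * ∑ i, ‖u i‖ ^ 2 := by
  have expand : ∀ I ∈ Finset.powersetCard b (Finset.univ : Finset (Fin n)),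
      ‖∑ i ∈ I, u i‖ ^ 2
        = ∑ i ∈ I, ‖u i‖ ^ 2 + ∑ i ∈ I, ∑ j ∈ I.erase i, (inner ℝ (u i) (u j) : ℝ) := by
    intro I _
    rw [← real_inner_self_eq_norm_sq, sum_inner, ← Finset.sum_add_distrib]
    refine Finset.sum_congr rfl fun i hi => ?_
    rw [inner_sum, ← Finset.add_sum_erase _ _ hi, real_inner_self_eq_norm_sq]
  rw [Finset.sum_congr rfl expand, Finset.sum_add_distrib]
  have hdiag : ∑ I ∈ Finset.powersetCard b (Finset.univ : Finset (Fin n)), ∑ i ∈ I, ‖u i‖ ^ 2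
      = ((n - 1).choose (b - 1) : ℝ) * ∑ i, ‖u i‖ ^ 2 := by
    rw [swap_one, Finset.mul_sum]
    refine Finset.sum_congr rfl fun i _ => ?_
    rw [count_one _ _ hb1 i (Finset.mem_univ i), Finset.card_univ, Fintype.card_fin, nsmul_eq_mul]
  have hcross : ∑ I ∈ Finset.powersetCard b (Finset.univ : Finset (Fin n)),
      ∑ i ∈ I, ∑ j ∈ I.erase i, (inner ℝ (u i) (u j) : ℝ) ≤ 0 := by
    rcases le_or_gt 2 b with hb2 | hb2
    · rw [swap_two]
      have hc : ∀ i ∈ (Finset.univ : Finset (Fin n)), ∀ j ∈ Finset.univ.erase i,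
          (((Finset.powersetCard b (Finset.univ : Finset (Fin n))).filter
              (fun I => i ∈ I ∧ j ∈ I)).card : ℝ) * (inner ℝ (u i) (u j) : ℝ)
            = ((n - 2).choose (b - 2) : ℝ) * (inner ℝ (u i) (u j) : ℝ) := by
        intro i _ j hj
        rw [count_two _ _ hb2 i j (Finset.mem_univ i) (Finset.mem_univ j)
          (Ne.symm (Finset.mem_erase.1 hj).1), Finset.card_univ, Fintype.card_fin]
      rw [Finset.sum_congr rfl (fun i hi => Finset.sum_congr rfl (hc i hi)),
        ]
      simp_rw [← Finset.mul_sum]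
      have hsum : ∑ i, ∑ j ∈ Finset.univ.erase i, (inner ℝ (u i) (u j) : ℝ)
          = - ∑ i, ‖u i‖ ^ 2 := by
        have h0 : (0 : ℝ) = inner ℝ (∑ i, u i) (∑ j, u j) := by rw [hu]; simp
        rw [sum_inner] at h0
        have h1 : ∀ i ∈ (Finset.univ : Finset (Fin n)),
            (inner ℝ (u i) (∑ j, u j) : ℝ)
              = ‖u i‖ ^ 2 + ∑ j ∈ Finset.univ.erase i, (inner ℝ (u i) (u j) : ℝ) := by
          intro i hi
          rw [inner_sum, ← Finset.add_sum_erase _ _ hi, real_inner_self_eq_norm_sq]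
        rw [Finset.sum_congr rfl h1, Finset.sum_add_distrib] at h0
        linarith
      rw [hsum]
      have : (0:ℝ) ≤ ∑ i, ‖u i‖ ^ 2 :=
        Finset.sum_nonneg fun i _ => sq_nonneg _
      have hN : (0:ℝ) ≤ ((n - 2).choose (b - 2) : ℝ) := Nat.cast_nonneg _
      nlinarith
    · interval_cases b
      refine le_of_eq (Finset.sum_eq_zero fun I hI => ?_)
      obtain ⟨a, rfl⟩ := Finset.card_eq_one.1 (Finset.mem_powersetCard.1 hI).2
      simp
  rw [hdiag]
  linarith

lemma main_abstract {n b : ℕ} {G : Type*} [NormedAddCommGroup G] [InnerProductSpace ℝ G]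
    (hb1 : 1 ≤ b) (hbn : b ≤ n) (w : Fin n → G) (K : G) :
    ∑ I ∈ Finset.powersetCard b (Finset.univ : Finset (Fin n)),
        ‖(b : ℝ)⁻¹ • ∑ i ∈ I, (w i - (n : ℝ)⁻¹ • ∑ j, w j) + K‖ ^ 2
      ≤ (n.choose b : ℝ) * ‖K‖ ^ 2
          + (n.choose b : ℝ) * ((b : ℝ) * (n : ℝ))⁻¹ * ∑ i, ‖w i‖ ^ 2 := by
  have hn1 : 1 ≤ n := le_trans hb1 hbn
  have hn0 : (n : ℝ) ≠ 0 := Nat.cast_ne_zero.2 (by omega)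
  have hb0 : (b : ℝ) ≠ 0 := Nat.cast_ne_zero.2 (by omega)
  set wbar : G := (n : ℝ)⁻¹ • ∑ j, w j with hwbar
  set u : Fin n → G := fun i => w i - wbar with hu
  have hu0 : ∑ i, u i = 0 := by
    simp only [hu, Finset.sum_sub_distrib, Finset.sum_const, Finset.card_univ,
      Fintype.card_fin]
    rw [← Nat.cast_smul_eq_nsmul ℝ, hwbar, smul_smul, mul_inv_cancel₀ hn0, one_smul, sub_self]
  set P := Finset.powersetCard b (Finset.univ : Finset (Fin n)) with hPdef
  have hPcard : (P.card : ℝ) = (n.choose b : ℝ) := by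
    rw [hPdef, Finset.card_powersetCard, Finset.card_univ, Fintype.card_fin]
  -- expand squares
  have hexp : ∀ I ∈ P, ‖(b : ℝ)⁻¹ • ∑ i ∈ I, u i + K‖ ^ 2
      = ‖(b : ℝ)⁻¹ • ∑ i ∈ I, u i‖ ^ 2
          + 2 * (inner ℝ ((b : ℝ)⁻¹ • ∑ i ∈ I, u i) K : ℝ) + ‖K‖ ^ 2 := by
    intro I _
    exact norm_add_sq_real _ _
  rw [Finset.sum_congr rfl hexp, Finset.sum_add_distrib, Finset.sum_add_distrib]
  have hcross : ∑ I ∈ P, 2 * (inner ℝ ((b : ℝ)⁻¹ • ∑ i ∈ I, u i) K : ℝ) = 0 := by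
    rw [← Finset.mul_sum, ← sum_inner]
    have : ∑ I ∈ P, (b : ℝ)⁻¹ • ∑ i ∈ I, u i = 0 := by
      rw [← Finset.smul_sum, swap_one]
      have : ∀ i ∈ (Finset.univ : Finset (Fin n)),
          ((P.filter (fun I => i ∈ I)).card) • u i
            = ((n - 1).choose (b - 1)) • u i := by
        intro i _
        rw [hPdef, count_one _ _ hb1 i (Finset.mem_univ i), Finset.card_univ,
          Fintype.card_fin]
      rw [Finset.sum_congr rfl this, ← Finset.smul_sum, hu0, smul_zero, smul_zero]
    rw [this, inner_zero_left, mul_zero]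
  rw [hcross]
  have hKsum : ∑ _I ∈ P, ‖K‖ ^ 2 = (n.choose b : ℝ) * ‖K‖ ^ 2 := by
    rw [Finset.sum_const, nsmul_eq_mul, hPcard]
  rw [hKsum, add_zero]
  have hsq : ∀ I ∈ P, ‖(b : ℝ)⁻¹ • ∑ i ∈ I, u i‖ ^ 2
      = (b : ℝ)⁻¹ * (b : ℝ)⁻¹ * ‖∑ i ∈ I, u i‖ ^ 2 := by
    intro I _
    rw [norm_smul, Real.norm_eq_abs, abs_of_nonneg (by positivity), mul_pow]
    ring
  rw [Finset.sum_congr rfl hsq, ← Finset.mul_sum]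
  have hkey := key_ineq hb1 u hu0
  have huw : ∑ i, ‖u i‖ ^ 2 ≤ ∑ i, ‖w i‖ ^ 2 := by
    have hsw : ∑ i, w i = (n : ℝ) • wbar := by
      rw [hwbar, smul_smul, mul_inv_cancel₀ hn0, one_smul]
    have hexp2 : ∀ i ∈ (Finset.univ : Finset (Fin n)), ‖u i‖ ^ 2
        = ‖w i‖ ^ 2 - 2 * (inner ℝ (w i) wbar : ℝ) + ‖wbar‖ ^ 2 := by
      intro i _
      exact norm_sub_sq_real _ _
    rw [Finset.sum_congr rfl hexp2, Finset.sum_add_distrib, Finset.sum_sub_distrib,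
      ← Finset.mul_sum, ← sum_inner, hsw, real_inner_smul_left,
      real_inner_self_eq_norm_sq, Finset.sum_const, Finset.card_univ, Fintype.card_fin,
      nsmul_eq_mul]
    nlinarith [sq_nonneg ‖wbar‖, (Nat.one_le_cast (α := ℝ)).2 hn1]
  have hcount : (n : ℝ) * ((n - 1).choose (b - 1) : ℝ) = (b : ℝ) * (n.choose b : ℝ) := by
    have h := Nat.add_one_mul_choose_eq (n - 1) (b - 1)
    rw [Nat.sub_add_cancel hn1,
      Nat.sub_add_cancel hb1] at h
    have h2 : n * (n - 1).choose (b - 1) = b * n.choose b := h.trans (Nat.mul_comm _ _)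
    exact_mod_cast congrArg (Nat.cast (R := ℝ)) h2
  have hbb : 0 < (b : ℝ)⁻¹ * (b : ℝ)⁻¹ := by positivity
  have hchain : (b : ℝ)⁻¹ * (b : ℝ)⁻¹ * ∑ I ∈ P, ‖∑ i ∈ I, u i‖ ^ 2
      ≤ (n.choose b : ℝ) * ((b : ℝ) * (n : ℝ))⁻¹ * ∑ i, ‖w i‖ ^ 2 := by
    have h1 : (b : ℝ)⁻¹ * (b : ℝ)⁻¹ * ∑ I ∈ P, ‖∑ i ∈ I, u i‖ ^ 2
        ≤ (b : ℝ)⁻¹ * (b : ℝ)⁻¹ * (((n - 1).choose (b - 1) : ℝ) * ∑ i, ‖w i‖ ^ 2) := by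
      apply mul_le_mul_of_nonneg_left _ hbb.le
      calc ∑ I ∈ P, ‖∑ i ∈ I, u i‖ ^ 2
          ≤ ((n - 1).choose (b - 1) : ℝ) * ∑ i, ‖u i‖ ^ 2 := hkey
        _ ≤ ((n - 1).choose (b - 1) : ℝ) * ∑ i, ‖w i‖ ^ 2 :=
            mul_le_mul_of_nonneg_left huw (Nat.cast_nonneg _)
    refine h1.trans (le_of_eq ?_)
    have hC' : ((n - 1).choose (b - 1) : ℝ) = (b : ℝ) * (n.choose b : ℝ) / (n : ℝ) := by
      field_simp
      linarith [hcount]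
    rw [hC']
    field_simp
  linarith

lemma grad_avg {d n : ℕ} (f : Fin n → EuclideanSpace ℝ (Fin d) → ℝ)
    (hdiff : ∀ i, Differentiable ℝ (f i)) (z : EuclideanSpace ℝ (Fin d)) :
    gradient (avgF f) z = (n : ℝ)⁻¹ • ∑ i, gradient (f i) z := by
  have hz : ∀ i ∈ (Finset.univ : Finset (Fin n)), DifferentiableAt ℝ (fun w => f i w) z :=
    fun i _ => (hdiff i).differentiableAt
  unfold avgF gradient
  rw [fderiv_const_mul (DifferentiableAt.fun_sum hz), fderiv_fun_sum hz, map_smul, map_sum]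

end Aux

/-- Lemma 2 (variance bound for the ZeroSARAH estimator). -/
theorem zerosarah_variance_bound {d n : ℕ} (hd : 1 ≤ d) (hn : 1 ≤ n)
    (L : ℝ) (hL : 0 < L)
    (f : Fin n → EuclideanSpace ℝ (Fin d) → ℝ)
    (hdiff : ∀ i, Differentiable ℝ (f i))
    (hsmooth : ∀ i (x y : EuclideanSpace ℝ (Fin d)),
      ‖gradient (f i) x - gradient (f i) y‖ ≤ L * ‖x - y‖)
    (x x' v' : EuclideanSpace ℝ (Fin d)) (y : Fin n → EuclideanSpace ℝ (Fin d))
    (lam : ℝ) (b : ℕ) (hb1 : 1 ≤ b) (hbn : b ≤ n) :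
    expSub n b (fun I => ‖zsEst f x x' v' y lam b I - gradient (avgF f) x‖ ^ 2)
      ≤ (1 - lam) ^ 2 * ‖v' - gradient (avgF f) x'‖ ^ 2
        + 2 * L ^ 2 / (b : ℝ) * ‖x - x'‖ ^ 2
        + 2 * lam ^ 2 / (b : ℝ) *
            ((n : ℝ)⁻¹ * ∑ j, ‖gradient (f j) x' - y j‖ ^ 2) := by
  classical
  have hn0 : (n : ℝ) ≠ 0 := Nat.cast_ne_zero.2 (by omega)
  have hb0 : (b : ℝ) ≠ 0 := Nat.cast_ne_zero.2 (by omega)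
  set w : Fin n → EuclideanSpace ℝ (Fin d) :=
    fun i => (gradient (f i) x - gradient (f i) x') + lam • (gradient (f i) x' - y i) with hw
  set K : EuclideanSpace ℝ (Fin d) := (1 - lam) • (v' - gradient (avgF f) x') with hK
  have gradE : ∀ z, gradient (avgF f) z = (n : ℝ)⁻¹ • ∑ i, gradient (f i) z :=
    grad_avg f hdiff
  have hid : ∀ I ∈ Finset.powersetCard b (Finset.univ : Finset (Fin n)),
      zsEst f x x' v' y lam b I - gradient (avgF f) x
        = (b : ℝ)⁻¹ • ∑ i ∈ I, (w i - (n : ℝ)⁻¹ • ∑ j, w j) + K := by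
    intro I hI
    have hIc : I.card = b := (Finset.mem_powersetCard.1 hI).2
    simp only [zsEst, hK, hw, gradE]
    simp only [smul_sub, smul_add, Finset.sum_add_distrib, Finset.sum_sub_distrib,
      ← Finset.smul_sum, Finset.sum_const, hIc]
    rw [← Nat.cast_smul_eq_nsmul ℝ]
    match_scalars <;> field_simp <;> ring
  have hPpos : (0 : ℝ) < ((Finset.powersetCard b (Finset.univ : Finset (Fin n))).card : ℝ) := by
    rw [Finset.card_powersetCard, Finset.card_univ, Fintype.card_fin]
    exact_mod_cast Nat.choose_pos hbn
  have hPcard : ((Finset.powersetCard b (Finset.univ : Finset (Fin n))).card : ℝ)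
      = (n.choose b : ℝ) := by
    rw [Finset.card_powersetCard, Finset.card_univ, Fintype.card_fin]
  rw [expSub, div_le_iff₀ hPpos]
  have hsum_eq : ∑ I ∈ Finset.powersetCard b (Finset.univ : Finset (Fin n)),
        ‖zsEst f x x' v' y lam b I - gradient (avgF f) x‖ ^ 2
      = ∑ I ∈ Finset.powersetCard b (Finset.univ : Finset (Fin n)),
        ‖(b : ℝ)⁻¹ • ∑ i ∈ I, (w i - (n : ℝ)⁻¹ • ∑ j, w j) + K‖ ^ 2 :=
    Finset.sum_congr rfl fun I hI => by rw [hid I hI]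
  have habs := main_abstract (n := n) (b := b) hb1 hbn w K
  have hterm : ∀ i ∈ (Finset.univ : Finset (Fin n)), ‖w i‖ ^ 2
      ≤ 2 * L ^ 2 * ‖x - x'‖ ^ 2 + 2 * lam ^ 2 * ‖gradient (f i) x' - y i‖ ^ 2 := by
    intro i _
    have h1 : ‖w i‖ ≤ ‖gradient (f i) x - gradient (f i) x'‖
        + |lam| * ‖gradient (f i) x' - y i‖ := by
      rw [hw]
      refine (norm_add_le _ _).trans ?_
      rw [norm_smul, Real.norm_eq_abs]
    have h2 := hsmooth i x x'
    have h4 : |lam| ^ 2 = lam ^ 2 := sq_abs lam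
    nlinarith [norm_nonneg (w i), norm_nonneg (gradient (f i) x - gradient (f i) x'),
      norm_nonneg (gradient (f i) x' - y i), abs_nonneg lam, norm_nonneg (x - x'), hL.le,
      sq_nonneg (‖gradient (f i) x - gradient (f i) x'‖ - |lam| * ‖gradient (f i) x' - y i‖),
      mul_le_mul h1 h1 (norm_nonneg (w i)) (by positivity),
      mul_le_mul h2 h2 (norm_nonneg _) (by positivity)]
  have hSw : ∑ i, ‖w i‖ ^ 2
      ≤ (n : ℝ) * (2 * L ^ 2 * ‖x - x'‖ ^ 2)
          + 2 * lam ^ 2 * ∑ j, ‖gradient (f j) x' - y j‖ ^ 2 := by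
    calc ∑ i, ‖w i‖ ^ 2
        ≤ ∑ i, (2 * L ^ 2 * ‖x - x'‖ ^ 2 + 2 * lam ^ 2 * ‖gradient (f i) x' - y i‖ ^ 2) :=
          Finset.sum_le_sum hterm
      _ = (n : ℝ) * (2 * L ^ 2 * ‖x - x'‖ ^ 2)
          + 2 * lam ^ 2 * ∑ j, ‖gradient (f j) x' - y j‖ ^ 2 := by
          rw [Finset.sum_add_distrib, Finset.sum_const, Finset.card_univ, Fintype.card_fin,
            nsmul_eq_mul, ← Finset.mul_sum]
  have hKsq : ‖K‖ ^ 2 = (1 - lam) ^ 2 * ‖v' - gradient (avgF f) x'‖ ^ 2 := by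
    rw [hK, norm_smul, Real.norm_eq_abs, mul_pow, sq_abs]
  have hmul : (n.choose b : ℝ) * ((b : ℝ) * (n : ℝ))⁻¹ * ∑ i, ‖w i‖ ^ 2
      ≤ (n.choose b : ℝ) * ((b : ℝ) * (n : ℝ))⁻¹ *
          ((n : ℝ) * (2 * L ^ 2 * ‖x - x'‖ ^ 2)
            + 2 * lam ^ 2 * ∑ j, ‖gradient (f j) x' - y j‖ ^ 2) := by
    apply mul_le_mul_of_nonneg_left hSw (by positivity)
  have hfinal : (n.choose b : ℝ) * ‖K‖ ^ 2
      + (n.choose b : ℝ) * ((b : ℝ) * (n : ℝ))⁻¹ *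
          ((n : ℝ) * (2 * L ^ 2 * ‖x - x'‖ ^ 2)
            + 2 * lam ^ 2 * ∑ j, ‖gradient (f j) x' - y j‖ ^ 2)
      = ((1 - lam) ^ 2 * ‖v' - gradient (avgF f) x'‖ ^ 2
          + 2 * L ^ 2 / (b : ℝ) * ‖x - x'‖ ^ 2
          + 2 * lam ^ 2 / (b : ℝ) *
              ((n : ℝ)⁻¹ * ∑ j, ‖gradient (f j) x' - y j‖ ^ 2)) * (n.choose b : ℝ) := by
    rw [hKsq]
    field_simp
    ring
  rw [hsum_eq, hPcard]
  calc ∑ I ∈ Finset.powersetCard b (Finset.univ : Finset (Fin n)),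
        ‖(b : ℝ)⁻¹ • ∑ i ∈ I, (w i - (n : ℝ)⁻¹ • ∑ j, w j) + K‖ ^ 2
      ≤ (n.choose b : ℝ) * ‖K‖ ^ 2
          + (n.choose b : ℝ) * ((b : ℝ) * (n : ℝ))⁻¹ * ∑ i, ‖w i‖ ^ 2 := habs
    _ ≤ (n.choose b : ℝ) * ‖K‖ ^ 2
          + (n.choose b : ℝ) * ((b : ℝ) * (n : ℝ))⁻¹ *
            ((n : ℝ) * (2 * L ^ 2 * ‖x - x'‖ ^ 2)
              + 2 * lam ^ 2 * ∑ j, ‖gradient (f j) x' - y j‖ ^ 2) := by linarith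
    _ = _ := hfinal
end
end

section
/- Fix x, x' ∈ ℝ^d, y_1, …, y_n ∈ ℝ^d, 1 ≤ b ≤ n and β > 0. For a subset I ⊆ {1,…,n}, define y_j⁺(I) := ∇f_j(x) if j ∈ I and y_j⁺(I) := y_j if j ∉ I. Then E_I[(1/n) ∑_{j=1}^n ‖∇f_j(x) − y_j⁺(I)‖²] ≤ (1 − b/n)(1 + β) · (1/n) ∑_{j=1}^n ‖∇f_j(x') − y_j‖² + (1 − b/n)(1 + 1/β) · L² ‖x − x'‖². -/
noncomputable section

set_option maxHeartbeats 1000000 in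
/-- Lemma 3 (tracking error recursion for the `yⱼ` memory vectors). -/
theorem zerosarah_tracking_bound {d n : ℕ} (hd : 1 ≤ d) (hn : 1 ≤ n)
    (L : ℝ) (hL : 0 < L)
    (f : Fin n → EuclideanSpace ℝ (Fin d) → ℝ)
    (hdiff : ∀ i, Differentiable ℝ (f i))
    (hsmooth : ∀ i (x y : EuclideanSpace ℝ (Fin d)),
      ‖gradient (f i) x - gradient (f i) y‖ ≤ L * ‖x - y‖)
    (x x' : EuclideanSpace ℝ (Fin d)) (y : Fin n → EuclideanSpace ℝ (Fin d))
    (b : ℕ) (hb1 : 1 ≤ b) (hbn : b ≤ n) (β : ℝ) (hβ : 0 < β) :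
    expSub n b (fun I => (n : ℝ)⁻¹ *
        ∑ j, ‖gradient (f j) x - (if j ∈ I then gradient (f j) x else y j)‖ ^ 2)
      ≤ (1 - (b : ℝ) / n) * (1 + β) *
          ((n : ℝ)⁻¹ * ∑ j, ‖gradient (f j) x' - y j‖ ^ 2)
        + (1 - (b : ℝ) / n) * (1 + 1 / β) * L ^ 2 * ‖x - x'‖ ^ 2 := by
  have hn0 : (0:ℝ) < (n:ℝ) := by exact_mod_cast hn
  set S := Finset.powersetCard b (Finset.univ : Finset (Fin n)) with hSdef
  set c : Fin n → ℝ := fun j => ‖gradient (f j) x - y j‖ ^ 2 with hc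
  set a : Fin n → ℝ := fun j => ‖gradient (f j) x' - y j‖ ^ 2 with ha
  set X : ℝ := ‖x - x'‖ ^ 2 with hX
  -- pointwise bound
  have hpt : ∀ j, c j ≤ (1 + β) * a j + (1 + 1/β) * L^2 * X := by
    intro j
    have htri : ‖gradient (f j) x - y j‖ ≤
        ‖gradient (f j) x' - y j‖ + ‖gradient (f j) x - gradient (f j) x'‖ := by
      have h1 : gradient (f j) x - y j =
          (gradient (f j) x' - y j) + (gradient (f j) x - gradient (f j) x') := by abel
      rw [h1]; exact norm_add_le _ _
    set s := ‖gradient (f j) x' - y j‖ with hs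
    set t := ‖gradient (f j) x - gradient (f j) x'‖ with ht
    have hs0 : 0 ≤ s := norm_nonneg _
    have ht0 : 0 ≤ t := norm_nonneg _
    have hxx0 : 0 ≤ ‖x - x'‖ := norm_nonneg _
    have htL : t ≤ L * ‖x - x'‖ := hsmooth j x x'
    have h2 : c j ≤ (s + t)^2 := by
      have := pow_le_pow_left₀ (norm_nonneg _) htri 2
      simpa [hc] using this
    have h3 : (s + t)^2 ≤ (1 + β) * s^2 + (1 + 1/β) * t^2 := by
      have key : β * ((1 + β) * s^2 + (1 + 1/β) * t^2 - (s + t)^2) = (β * s - t)^2 := by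
        field_simp; ring
      nlinarith [key, sq_nonneg (β * s - t)]
    have h4 : t^2 ≤ L^2 * X := by
      have := mul_self_le_mul_self ht0 htL
      nlinarith
    have h5 : (0:ℝ) < 1 + 1/β := by positivity
    have h6 : (1 + 1/β) * t^2 ≤ (1 + 1/β) * (L^2 * X) :=
      mul_le_mul_of_nonneg_left h4 h5.le
    have haj : a j = s^2 := rfl
    rw [haj]
    nlinarith [h2, h3, h6]
  -- expectation computation
  have hScard : (S.card : ℝ) = (n.choose b : ℝ) := by
    rw [hSdef, Finset.card_powersetCard]; simp
  have hfilter : ∀ j : Fin n, S.filter (fun I => j ∉ I)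
      = Finset.powersetCard b ((Finset.univ : Finset (Fin n)).erase j) := by
    intro j
    ext I
    simp only [Finset.mem_filter, hSdef, Finset.mem_powersetCard, Finset.subset_erase]
    tauto
  have herase : ∀ j : Fin n, ((Finset.univ : Finset (Fin n)).erase j).card = n - 1 := by
    intro j
    rw [Finset.card_erase_of_mem (Finset.mem_univ j)]
    simp
  have hinner : ∀ j : Fin n,
      (∑ I ∈ S, (if j ∈ I then (0:ℝ) else c j)) = ((n-1).choose b : ℝ) * c j := by
    intro j
    rw [Finset.sum_ite]
    simp only [Finset.sum_const_zero, Finset.sum_const, zero_add, nsmul_eq_mul]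
    congr 1
    rw [hfilter j, Finset.card_powersetCard, herase j]
  have hsum : (∑ I ∈ S, ((n : ℝ)⁻¹ *
      ∑ j, ‖gradient (f j) x - (if j ∈ I then gradient (f j) x else y j)‖ ^ 2))
      = (n : ℝ)⁻¹ * (((n-1).choose b : ℝ) * ∑ j, c j) := by
    have hterm : ∀ (I : Finset (Fin n)) (j : Fin n),
        ‖gradient (f j) x - (if j ∈ I then gradient (f j) x else y j)‖ ^ 2
        = if j ∈ I then (0:ℝ) else c j := by
      intro I j; split <;> simp [hc]
    calc (∑ I ∈ S, ((n : ℝ)⁻¹ *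
          ∑ j, ‖gradient (f j) x - (if j ∈ I then gradient (f j) x else y j)‖ ^ 2))
        = (n : ℝ)⁻¹ * ∑ j, ∑ I ∈ S, (if j ∈ I then (0:ℝ) else c j) := by
          rw [← Finset.mul_sum, Finset.sum_comm]
          congr 1; apply Finset.sum_congr rfl; intro j _
          apply Finset.sum_congr rfl; intro I _; exact hterm I j
      _ = (n : ℝ)⁻¹ * ∑ j, ((n-1).choose b : ℝ) * c j := by
          congr 1; exact Finset.sum_congr rfl (fun j _ => hinner j)
      _ = (n : ℝ)⁻¹ * (((n-1).choose b : ℝ) * ∑ j, c j) := by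
          congr 1; rw [Finset.mul_sum]
  -- binomial ratio identity
  have hchoose_pos : (0:ℝ) < (n.choose b : ℝ) := by
    exact_mod_cast Nat.choose_pos hbn
  have hratio : ((n-1).choose b : ℝ) = (n.choose b : ℝ) * (((n:ℝ) - b) / n) := by
    have hnat : (n-1).choose b * n = n.choose b * (n - b) := by
      have := Nat.choose_mul_succ_eq (n-1) b
      rwa [Nat.sub_add_cancel hn] at this
    have hcast : ((n-1).choose b : ℝ) * n = (n.choose b : ℝ) * ((n:ℝ) - b) := by
      have := congrArg (fun m : ℕ => (m : ℝ)) hnat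
      push_cast [Nat.cast_sub hbn] at this
      exact this
    field_simp
    linarith [hcast]
  have hLHS : expSub n b (fun I => (n : ℝ)⁻¹ *
      ∑ j, ‖gradient (f j) x - (if j ∈ I then gradient (f j) x else y j)‖ ^ 2)
      = (((n:ℝ) - b) / n) * ((n : ℝ)⁻¹ * ∑ j, c j) := by
    rw [expSub, ← hSdef, hsum, hScard, hratio]
    field_simp
  rw [hLHS]
  have hfac : (0:ℝ) ≤ ((n:ℝ) - b) / n := by
    apply div_nonneg _ hn0.le
    have : (b:ℝ) ≤ n := by exact_mod_cast hbn
    linarith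
  have hsumle : ∑ j, c j ≤ (1 + β) * (∑ j, a j) + (n:ℝ) * ((1 + 1/β) * L^2 * X) := by
    calc ∑ j, c j ≤ ∑ j, ((1 + β) * a j + (1 + 1/β) * L^2 * X) :=
          Finset.sum_le_sum (fun j _ => hpt j)
      _ = (1 + β) * (∑ j, a j) + (n:ℝ) * ((1 + 1/β) * L^2 * X) := by
          rw [Finset.sum_add_distrib, ← Finset.mul_sum, Finset.sum_const]
          simp [nsmul_eq_mul]
  have hfac2 : (0:ℝ) ≤ ((n:ℝ) - b) / n * (n:ℝ)⁻¹ := by positivity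
  have : (((n:ℝ) - b) / n) * ((n : ℝ)⁻¹ * ∑ j, c j)
      ≤ (((n:ℝ) - b) / n) * ((n : ℝ)⁻¹ *
        ((1 + β) * (∑ j, a j) + (n:ℝ) * ((1 + 1/β) * L^2 * X))) := by
    rw [← mul_assoc, ← mul_assoc]
    exact mul_le_mul_of_nonneg_left hsumle hfac2
  refine this.trans (le_of_eq ?_)
  have hone : 1 - (b:ℝ)/n = ((n:ℝ) - b)/n := by field_simp
  rw [hone]
  field_simp
end
end

section
/- Fix x, x' ∈ ℝ^d, v' ∈ ℝ^d, y_1, …, y_n ∈ ℝ^d, λ ∈ ℝ and 1 ≤ b ≤ n. Then the ZeroSARAH gradient estimator satisfies E_I[v(I) − ∇f(x)] = (1 − λ)(v' − ∇f(x')), where E_I is the expectation over a uniformly random size-b minibatch. -/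
noncomputable section

/-- Expectation (average) of a vector-valued function of a uniformly random
size-`b` subset of `{1,…,n}`. -/
noncomputable def expSubV {d : ℕ} (n b : ℕ)
    (g : Finset (Fin n) → EuclideanSpace ℝ (Fin d)) : EuclideanSpace ℝ (Fin d) :=
  (((Finset.powersetCard b (Finset.univ : Finset (Fin n))).card : ℝ))⁻¹ •
    ∑ I ∈ Finset.powersetCard b (Finset.univ : Finset (Fin n)), g I

/-- number of `b`-subsets of a fintype containing a fixed element -/
lemma card_filter_mem_powersetCard {α : Type*} [Fintype α] [DecidableEq α]
    (i : α) (b : ℕ) (hb : 1 ≤ b) :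
    ((Finset.powersetCard b (Finset.univ : Finset α)).filter (fun I => i ∈ I)).card
      = (Fintype.card α - 1).choose (b - 1) := by
  have hcard : (Fintype.card α - 1) = ((Finset.univ : Finset α).erase i).card := by
    simp [Finset.card_erase_of_mem, Finset.card_univ]
  rw [hcard, ← Finset.card_powersetCard (b - 1) ((Finset.univ : Finset α).erase i)]
  · apply Finset.card_bij (fun I _ => I.erase i)
    · intro I hI
      simp only [Finset.mem_filter, Finset.mem_powersetCard] at hI
      rw [Finset.mem_powersetCard]
      refine ⟨fun j hj => ?_, ?_⟩
      · rw [Finset.mem_erase] at hj ⊢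
        exact ⟨hj.1, Finset.mem_univ _⟩
      · rw [Finset.card_erase_of_mem hI.2, hI.1.2]
    · intro I hI J hJ h
      simp only [Finset.mem_filter] at hI hJ
      have : insert i (I.erase i) = insert i (J.erase i) := by rw [h]
      rwa [Finset.insert_erase hI.2, Finset.insert_erase hJ.2] at this
    · intro J hJ
      rw [Finset.mem_powersetCard] at hJ
      have hiJ : i ∉ J := fun h => by
        have := hJ.1 h; simp [Finset.mem_erase] at this
      refine ⟨insert i J, ?_, ?_⟩
      · simp only [Finset.mem_filter, Finset.mem_powersetCard]
        refine ⟨⟨fun j _ => Finset.mem_univ _, ?_⟩, Finset.mem_insert_self _ _⟩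
        rw [Finset.card_insert_of_notMem hiJ, hJ.2]
        omega
      · rw [Finset.erase_insert hiJ]

lemma sum_powersetCard_sum_mem {α : Type*} [Fintype α] [DecidableEq α]
    {M : Type*} [AddCommMonoid M] (b : ℕ) (hb : 1 ≤ b) (g : α → M) :
    ∑ I ∈ Finset.powersetCard b (Finset.univ : Finset α), ∑ i ∈ I, g i
      = ((Fintype.card α - 1).choose (b - 1)) • ∑ i, g i := by
  have : ∀ I ∈ Finset.powersetCard b (Finset.univ : Finset α),
      ∑ i ∈ I, g i = ∑ i : α, if i ∈ I then g i else 0 := by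
    intro I _
    rw [Finset.sum_ite_mem, Finset.univ_inter]
  rw [Finset.sum_congr rfl this, Finset.sum_comm, Finset.smul_sum]
  refine Finset.sum_congr rfl fun i _ => ?_
  rw [← Finset.sum_filter, Finset.sum_const, card_filter_mem_powersetCard i b hb]

theorem zerosarah_estimator_mean_aux : True := trivial

/-- Conditional-mean identity for the ZeroSARAH estimator:
`E_I[v(I) − ∇f(x)] = (1 − λ)(v' − ∇f(x'))`. -/
theorem zerosarah_estimator_mean {d n : ℕ} (hd : 1 ≤ d) (hn : 1 ≤ n)
    (f : Fin n → EuclideanSpace ℝ (Fin d) → ℝ)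
    (hdiff : ∀ i, Differentiable ℝ (f i))
    (x x' v' : EuclideanSpace ℝ (Fin d)) (y : Fin n → EuclideanSpace ℝ (Fin d))
    (lam : ℝ) (b : ℕ) (hb1 : 1 ≤ b) (hbn : b ≤ n) :
    expSubV n b (fun I => zsEst f x x' v' y lam b I - gradient (avgF f) x)
      = (1 - lam) • (v' - gradient (avgF f) x') := by
  -- card of powersetCard
  have hC : (Finset.powersetCard b (Finset.univ : Finset (Fin n))).card = n.choose b := by
    rw [Finset.card_powersetCard, Finset.card_univ, Fintype.card_fin]
  have hCne : ((Finset.powersetCard b (Finset.univ : Finset (Fin n))).card : ℝ) ≠ 0 := by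
    rw [hC]
    exact_mod_cast (Nat.choose_pos hbn).ne'
  -- gradient of the average
  have hgrad : ∀ z, gradient (avgF f) z = (n : ℝ)⁻¹ • ∑ i, gradient (f i) z := by
    intro z
    have h1 : ∀ i : Fin n, HasGradientAt (f i) (gradient (f i) z) z :=
      fun i => ((hdiff i) z).hasGradientAt
    have h2 : HasFDerivAt (fun w => ∑ i, f i w)
        (∑ i, InnerProductSpace.toDual ℝ _ (gradient (f i) z)) z :=
      HasFDerivAt.fun_sum fun i _ => (h1 i).hasFDerivAt
    have h3 : HasFDerivAt (avgF f)
        ((n : ℝ)⁻¹ • ∑ i, InnerProductSpace.toDual ℝ _ (gradient (f i) z)) z :=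
      h2.const_mul _
    have h4 : HasGradientAt (avgF f) ((n : ℝ)⁻¹ • ∑ i, gradient (f i) z) z := by
      rw [hasGradientAt_iff_hasFDerivAt, map_smul, map_sum]
      exact h3
    exact h4.gradient
  -- key averaging fact
  have key : ∀ a : Fin n → EuclideanSpace ℝ (Fin d),
      (((Finset.powersetCard b (Finset.univ : Finset (Fin n))).card : ℝ))⁻¹ •
        ∑ I ∈ Finset.powersetCard b (Finset.univ : Finset (Fin n)),
          (b : ℝ)⁻¹ • ∑ i ∈ I, a i
      = (n : ℝ)⁻¹ • ∑ i, a i := by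
    intro a
    rw [← Finset.smul_sum, sum_powersetCard_sum_mem b hb1 a, hC, Fintype.card_fin]
    rw [← Nat.cast_smul_eq_nsmul ℝ, smul_smul, smul_smul]
    congr 1
    have hmul : (n : ℝ) * (n - 1).choose (b - 1) = (n.choose b : ℝ) * b := by
      have := Nat.add_one_mul_choose_eq (n - 1) (b - 1)
      have hn1 : n - 1 + 1 = n := by omega
      have hb1' : b - 1 + 1 = b := by omega
      rw [hn1, hb1'] at this
      exact_mod_cast this
    have hnb : (n.choose b : ℝ) ≠ 0 := by exact_mod_cast (Nat.choose_pos hbn).ne'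
    have hbne : (b : ℝ) ≠ 0 := by positivity
    have hnne : (n : ℝ) ≠ 0 := by positivity
    field_simp
    linarith [hmul]
  -- decompose the estimator
  have hdecomp : ∀ I : Finset (Fin n),
      zsEst f x x' v' y lam b I - gradient (avgF f) x
      = ((b : ℝ)⁻¹ • ∑ i ∈ I, (gradient (f i) x - gradient (f i) x'))
        + lam • ((b : ℝ)⁻¹ • ∑ i ∈ I, (gradient (f i) x' - y i))
        + ((1 - lam) • v' + (lam * (n : ℝ)⁻¹) • ∑ j, y j - gradient (avgF f) x) := by
    intro I
    simp only [zsEst, smul_add, smul_smul]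
    abel
  -- compute the expectation
  unfold expSubV
  simp only [hdecomp]
  rw [Finset.sum_add_distrib, smul_add]
  rw [Finset.sum_add_distrib, smul_add]
  rw [← Finset.smul_sum (r := lam), smul_comm (((Finset.powersetCard b
      (Finset.univ : Finset (Fin n))).card : ℝ))⁻¹ lam]
  rw [key, key]
  rw [Finset.sum_const, ← Nat.cast_smul_eq_nsmul ℝ, inv_smul_smul₀ hCne]
  rw [hgrad x, hgrad x']
  simp only [Finset.sum_sub_distrib, smul_sub, smul_add, smul_smul]
  module
end
end
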